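/- Every k-element subset I of {0,…,n−1} can be written as a componentwise minimum I = min of the collection {I_i^l : I ≤ I_i^l} over the special subsets I_i^l. More precisely: if I = I_1 ∪ … ∪ I_m is the decomposition of I into maximal intervals, then I = min{J_1, J_2} where J_1 := {min I_2 − #I_1, …, min I_2 − 1} ∪ I_2 ∪ … ∪ I_m and J_2 := I_1 ∪ {n−1−k+#I_1, …, n−1}, with J_2 = I_i^l for l = #I_1 and i = l + min I_1. -/

import Mathlib

/-- The sorted list of elements of a finset of naturals, in increasing order. -/
def sortedList (I : Finset ℕ) : List ℕ := I.sort (· ≤ ·)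

/-- The componentwise minimum of two finsets of naturals. -/
def fmin (I J : Finset ℕ) : Finset ℕ :=
  (List.zipWith min (sortedList I) (sortedList J)).toFinset

/-- The special `k`-subsets `I_i^l` of `{0, …, n-1}`. -/
def Iil (n k i l : ℕ) : Finset ℕ :=
  if i + k < n + l then Finset.Ico (i - l) i ∪ Finset.Ico (n - k + l) n
  else Finset.Ico (n - k) n

/-- Every `k`-subset `I` of `{0,…,n-1}` is a componentwise minimum of special subsets
`I_i^l` above it.  Precisely: let `I₁ = {a₀, …, a₀ + c - 1}` (with `c = #I₁ > 0`) be the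
first maximal interval of `I` (so `a₀ = min I`, `I₁ ⊆ I`, `a₀ + c ∉ I`), suppose `I ≠ I₁`
(there are at least two maximal intervals) and let `b = min I₂` be the least element of
`I \ I₁`.  Put `J₁ := {b - c, …, b - 1} ∪ (I \ I₁)` and `J₂ := I₁ ∪ {n - k + c, …, n-1}`.
Then `I = min{J₁, J₂}`, and `J₂ = I_i^l` for `l = c = #I₁` and `i = l + min I₁`. -/

lemma sort_Ico (a b : ℕ) : (Finset.Ico a b).sort (· ≤ ·) = List.range' a (b - a) := by
  apply fun hp h1 h2 => List.Perm.eq_of_pairwise' (r := (· ≤ · : ℕ → ℕ → Prop)) h1 h2 hp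
  · apply List.perm_of_nodup_nodup_toFinset_eq (Finset.sort_nodup _ _) (List.nodup_range' (s := a) (n := b - a))
    ext x
    simp [Finset.mem_sort, List.mem_range'_1]
    omega
  · exact Finset.pairwise_sort _ _
  · exact List.Pairwise.imp le_of_lt (List.pairwise_lt_range' (s := a) (n := b-a))

lemma sort_union (A B : Finset ℕ) (h : ∀ a ∈ A, ∀ b ∈ B, a < b) :
    (A ∪ B).sort (· ≤ ·) = A.sort (· ≤ ·) ++ B.sort (· ≤ ·) := by
  apply fun hp h1 h2 => List.Perm.eq_of_pairwise' (r := (· ≤ · : ℕ → ℕ → Prop)) h1 h2 hp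
  · apply List.perm_of_nodup_nodup_toFinset_eq (Finset.sort_nodup _ _)
    · rw [List.nodup_append]
      refine ⟨Finset.sort_nodup _ _, Finset.sort_nodup _ _, ?_⟩
      intro x hx y hx'
      simp only [Finset.mem_sort] at hx hx'
      exact (h x hx y hx').ne
    · ext x; simp [Finset.mem_sort]
  · exact Finset.pairwise_sort _ _
  · rw [List.pairwise_append]
    refine ⟨Finset.pairwise_sort _ _, Finset.pairwise_sort _ _, ?_⟩
    intro a ha b hb
    simp only [Finset.mem_sort] at ha hb
    exact (h a ha b hb).le

lemma zip_range'_range' : ∀ (c d a0 : ℕ), a0 ≤ d →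
    List.zipWith min (List.range' d c) (List.range' a0 c) = List.range' a0 c := by
  intro c
  induction c with
  | zero => simp
  | succ c ih =>
    intro d a0 h
    rw [List.range'_succ, List.range'_succ, List.zipWith_cons_cons,
      min_eq_right h, ih (d+1) (a0+1) (by omega)]

lemma aux1 : ∀ (t : List ℕ) (x M : ℕ), List.Pairwise (· < ·) (x :: t) →
    (∀ y ∈ x :: t, y < M) → x + t.length < M := by
  intro t
  induction t with
  | nil => intro x M _ hM; simpa using hM x (by simp)
  | cons y t' ih =>
    intro x M hs hM
    have h1 : x < y := (List.pairwise_cons.1 hs).1 y (by simp)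
    have h2 : y + t'.length < M := ih y M (List.pairwise_cons.1 hs).2
      (fun z hz => hM z (List.mem_cons_of_mem _ hz))
    simp only [List.length_cons]
    omega

lemma zip_sorted_range' : ∀ (L : List ℕ) (m : ℕ), List.Pairwise (· < ·) L →
    (∀ y ∈ L, y < m + L.length) →
    List.zipWith min L (List.range' m L.length) = L := by
  intro L
  induction L with
  | nil => simp
  | cons x t ih =>
    intro m hs hM
    have hx : x ≤ m := by
      have := aux1 t x (m + (x :: t).length) hs hM
      simp only [List.length_cons] at this; omega
    rw [List.length_cons, List.range'_succ, List.zipWith_cons_cons, min_eq_left hx,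
      ih (m+1) (List.pairwise_cons.1 hs).2]
    intro y hy
    have := hM y (List.mem_cons_of_mem _ hy)
    simp only [List.length_cons] at this; omega

theorem stmt3 (n k : ℕ) (hk : 0 < k) (hkn : k ≤ n)
    (I : Finset ℕ) (hIsub : I ⊆ Finset.range n) (hIcard : I.card = k)
    (a0 c : ℕ) (hc : 0 < c)
    (hI1 : Finset.Ico a0 (a0 + c) ⊆ I)
    (hmin : ∀ x ∈ I, a0 ≤ x)
    (hmax : a0 + c ∉ I)
    (hne : (I \ Finset.Ico a0 (a0 + c)).Nonempty)
    (b : ℕ) (hb : b = (I \ Finset.Ico a0 (a0 + c)).min' hne) :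
    fmin (Finset.Ico (b - c) b ∪ (I \ Finset.Ico a0 (a0 + c)))
        (Finset.Ico a0 (a0 + c) ∪ Finset.Ico (n - k + c) n) = I
    ∧ Finset.Ico a0 (a0 + c) ∪ Finset.Ico (n - k + c) n = Iil n k (c + a0) c := by
  set I' := I \ Finset.Ico a0 (a0 + c) with hI'
  -- basic facts
  have hck : c ≤ k := by
    have := Finset.card_le_card hI1
    simp [Nat.Ico_eq_range', hIcard] at this
    omega
  have hcardI' : I'.card = k - c := by
    rw [hI', Finset.card_sdiff_of_subset hI1, hIcard, Nat.card_Ico]; omega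
  have hck' : c < k := by
    have := Finset.card_pos.2 hne
    omega
  have hbmem : b ∈ I' := hb ▸ Finset.min'_mem _ hne
  have hble : ∀ x ∈ I', b ≤ x := fun x hx => hb ▸ Finset.min'_le _ x hx
  have hbI : b ∈ I := (Finset.mem_sdiff.1 hbmem).1
  have hbnot : b ∉ Finset.Ico a0 (a0 + c) := (Finset.mem_sdiff.1 hbmem).2
  have hbgt : a0 + c < b := by
    have h1 := hmin b hbI
    have : ¬ (a0 ≤ b ∧ b < a0 + c) := by simpa [Finset.mem_Ico] using hbnot
    have hne' : b ≠ a0 + c := fun h => hmax (h ▸ hbI)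
    omega
  have hI'gt : ∀ x ∈ I', a0 + c < x := fun x hx => lt_of_lt_of_le hbgt (hble x hx)
  have hI'lt : ∀ x ∈ I', x < n := fun x hx =>
    Finset.mem_range.1 (hIsub (Finset.mem_sdiff.1 hx).1)
  have hbn : b < n := hI'lt b hbmem
  have hsubIco : I ⊆ Finset.Ico a0 n := fun x hx =>
    Finset.mem_Ico.2 ⟨hmin x hx, Finset.mem_range.1 (hIsub hx)⟩
  have hkn' : a0 + k ≤ n := by
    have := Finset.card_le_card hsubIco
    rw [hIcard, Nat.card_Ico] at this; omega
  have hakn : a0 + k < n := by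
    rcases Nat.lt_or_ge (a0 + k) n with h | h
    · exact h
    · exfalso
      have heq : I = Finset.Ico a0 n := Finset.eq_of_subset_of_card_le hsubIco
        (by rw [hIcard, Nat.card_Ico]; omega)
      exact hmax (heq ▸ Finset.mem_Ico.2 ⟨by omega, by omega⟩)
  have hunion : Finset.Ico a0 (a0 + c) ∪ I' = I := Finset.union_sdiff_of_subset hI1
  -- the sorted lists
  set L := I'.sort (· ≤ ·) with hL
  have hLlen : L.length = k - c := by rw [hL, Finset.length_sort, hcardI']
  have hsortI : sortedList I = List.range' a0 c ++ L := by
    rw [sortedList, ← hunion, sort_union _ _ (fun x hx y hy =>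
      lt_of_lt_of_le (Finset.mem_Ico.1 hx).2 (le_of_lt (hI'gt y hy))),
      sort_Ico]
    congr 2
    omega
  have hsortJ1 : sortedList (Finset.Ico (b - c) b ∪ I') = List.range' (b - c) c ++ L := by
    rw [sortedList, sort_union _ _ (fun x hx y hy =>
      lt_of_lt_of_le (Finset.mem_Ico.1 hx).2 (hble y hy)), sort_Ico]
    congr 2
    omega
  have hsortJ2 : sortedList (Finset.Ico a0 (a0 + c) ∪ Finset.Ico (n - k + c) n)
      = List.range' a0 c ++ List.range' (n - k + c) (k - c) := by
    rw [sortedList, sort_union _ _ (fun x hx y hy => by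
      have h1 := (Finset.mem_Ico.1 hx).2
      have h2 := (Finset.mem_Ico.1 hy).1
      omega), sort_Ico, sort_Ico]
    congr 2 <;> omega
  constructor
  · rw [fmin, hsortJ1, hsortJ2,
      List.zipWith_append (by simp),
      zip_range'_range' c (b - c) a0 (by omega)]
    rw [show List.range' (n - k + c) (k - c) = List.range' (n - k + c) L.length by rw [hLlen],
      zip_sorted_range' L (n - k + c) (Finset.sortedLT_sort _).pairwise
        (fun y hy => by
          have := hI'lt y (by rwa [← Finset.mem_sort (α := ℕ) (· ≤ ·), ← hL])
          omega)]
    rw [← hsortI, sortedList, Finset.sort_toFinset]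
  · rw [Iil, if_pos (by omega : c + a0 + k < n + c)]
    congr 2 <;> omega
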